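/- Let ℓ₁,…,ℓₙ₊₁ (n ≥ 3) be positive integers with even sum, and suppose there are vectors v₁,…,vₙ₊₁ in ℝ³ with |vᵢ| = ℓᵢ summing to zero. Then the vectors can be chosen so that ℓ'ₙ := |vₙ + vₙ₊₁| is an integer and ℓ'ₙ + ℓₙ + ℓₙ₊₁ is even. -/

import Mathlib

open scoped RealInnerProductSpace
open Module

lemma exists_unit_orthogonal (x : EuclideanSpace ℝ (Fin 3)) :
    ∃ e : EuclideanSpace ℝ (Fin 3), ‖e‖ = 1 ∧ ⟪x, e⟫ = 0 := by
  have hdim : finrank ℝ (EuclideanSpace ℝ (Fin 3)) = 3 := by simp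
  have hle : finrank ℝ (ℝ ∙ x) ≤ 1 := by simpa using finrank_span_le_card ({x} : Set (EuclideanSpace ℝ (Fin 3)))
  have hsum := Submodule.finrank_add_finrank_orthogonal (𝕜 := ℝ) (ℝ ∙ x)
  have hpos : (ℝ ∙ x)ᗮ ≠ ⊥ := by
    intro hbot
    rw [hbot] at hsum
    simp [hdim] at hsum
    omega
  obtain ⟨y, hy, hy0⟩ := Submodule.exists_mem_ne_zero_of_ne_bot hpos
  refine ⟨‖y‖⁻¹ • y, ?_, ?_⟩
  · rw [norm_smul]
    simp [norm_ne_zero_iff.mpr hy0]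
  · have := Submodule.mem_orthogonal (ℝ ∙ x) y |>.mp hy x (Submodule.mem_span_singleton_self x)
    rw [real_inner_smul_right, this, mul_zero]

lemma split_vector (x : EuclideanSpace ℝ (Fin 3)) (s r1 r2 : ℝ)
    (hx : ‖x‖ = s) (h1 : 0 ≤ r1) (h2 : 0 ≤ r2)
    (hlo1 : r1 - r2 ≤ s) (hlo2 : r2 - r1 ≤ s) (hhi : s ≤ r1 + r2) :
    ∃ u v : EuclideanSpace ℝ (Fin 3), ‖u‖ = r1 ∧ ‖v‖ = r2 ∧ u + v = x := by
  have hs0 : 0 ≤ s := hx ▸ norm_nonneg x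
  rcases eq_or_lt_of_le hs0 with hs | hs
  · -- s = 0
    have hx0 : x = 0 := by rw [← norm_eq_zero, hx, ← hs]
    have hr : r1 = r2 := le_antisymm (by linarith) (by linarith)
    refine ⟨r1 • EuclideanSpace.single (0 : Fin 3) (1:ℝ),
      -(r1 • EuclideanSpace.single (0 : Fin 3) (1:ℝ)), ?_, ?_, by simp [hx0]⟩
    · rw [norm_smul]; simp [abs_of_nonneg h1]
    · rw [norm_neg, norm_smul, hr]; simp [abs_of_nonneg h2]
  · obtain ⟨e, he1, he0⟩ := exists_unit_orthogonal x
    set α : ℝ := (s^2 + r1^2 - r2^2) / (2*s) with hα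
    have key1 : (s - r1)^2 ≤ r2^2 :=
      sq_le_sq' (by linarith) (by linarith)
    have key2 : r2^2 ≤ (s + r1)^2 :=
      sq_le_sq' (by linarith) (by linarith)
    have hα2 : α^2 ≤ r1^2 := by
      rw [hα, div_pow]
      rw [div_le_iff₀ (by positivity)]
      nlinarith [key1, key2, hs, mul_pos hs hs]
    set β : ℝ := Real.sqrt (r1^2 - α^2) with hβ
    have hβ2 : β^2 = r1^2 - α^2 := Real.sq_sqrt (by linarith)
    set u : EuclideanSpace ℝ (Fin 3) := (α / s) • x + β • e with hu
    have hxe : ⟪x, e⟫ = 0 := he0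
    have hex : ⟪e, x⟫ = 0 := by rw [real_inner_comm]; exact he0
    have hxx : ⟪x, x⟫ = s^2 := by rw [real_inner_self_eq_norm_sq, hx]
    have hee : ⟪e, e⟫ = 1 := by rw [real_inner_self_eq_norm_sq, he1]; norm_num
    have hun : ‖u‖^2 = r1^2 := by
      rw [← real_inner_self_eq_norm_sq, hu]
      simp only [inner_add_left, inner_add_right, real_inner_smul_left,
        real_inner_smul_right, hxx, hxe, hex, hee]
      field_simp
      nlinarith [hβ2, hs]
    have hu1 : ‖u‖ = r1 := by
      have := Real.sqrt_sq (norm_nonneg u)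
      rw [← this, hun, Real.sqrt_sq h1]
    refine ⟨u, x - u, hu1, ?_, by abel⟩
    have hxu : ⟪x, u⟫ = α * s := by
      rw [hu]
      simp only [inner_add_right, real_inner_smul_right, hxx, hxe]
      field_simp
      ring
    have h2sq : ‖x - u‖^2 = r2^2 := by
      rw [← real_inner_self_eq_norm_sq, inner_sub_sub_self, hxx, hxu, real_inner_comm, hxu,
        real_inner_self_eq_norm_sq, hu1, hα]
      field_simp
      ring
    have h2' := Real.sqrt_sq (norm_nonneg (x - u))
    rw [← h2', h2sq, Real.sqrt_sq h2]

lemma polygon_list : ∀ (N : ℕ) (L : List ℝ), L.length ≤ N →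
    (∀ r ∈ L, 0 ≤ r) → (∀ r ∈ L, r ≤ L.sum - r) →
    ∃ V : List (EuclideanSpace ℝ (Fin 3)), V.map norm = L ∧ V.sum = 0 := by
  intro N
  induction N with
  | zero =>
    intro L hlen _ _
    have : L = [] := List.eq_nil_of_length_eq_zero (Nat.le_zero.mp hlen)
    exact ⟨[], by simp [this], rfl⟩
  | succ N ih =>
    intro L hlen h0 hpoly
    match L with
    | [] => exact ⟨[], rfl, rfl⟩
    | [r] =>
      have h1 : r ≤ 0 := by have := hpoly r (by simp); simpa using this
      have h2 : 0 ≤ r := h0 r (by simp)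
      have : r = 0 := le_antisymm h1 h2
      exact ⟨[0], by simp [this], by simp⟩
    | r1 :: r2 :: rest =>
      have hr1 : 0 ≤ r1 := h0 r1 (by simp)
      have hr2 : 0 ≤ r2 := h0 r2 (by simp)
      have hrest : ∀ r ∈ rest, 0 ≤ r := fun r hr => h0 r (by simp [hr])
      have hT : 0 ≤ rest.sum := List.sum_nonneg hrest
      set T := rest.sum with hTdef
      set s := min (r1 + r2) T with hsdef
      have hs0 : 0 ≤ s := le_min (by linarith) hT
      have hLsum : (r1 :: r2 :: rest).sum = r1 + r2 + T := by simp [hTdef]; ring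
      have hp1 : r1 ≤ r2 + T := by
        have := hpoly r1 (by simp); simp [hTdef] at this; linarith
      have hp2 : r2 ≤ r1 + T := by
        have := hpoly r2 (by simp); simp [hTdef] at this; linarith
      have hlen' : (s :: rest).length ≤ N := by
        simp only [List.length_cons] at hlen ⊢; omega
      have h0' : ∀ r ∈ s :: rest, 0 ≤ r := by
        intro r hr
        rcases List.mem_cons.mp hr with h | h
        · exact h ▸ hs0
        · exact hrest r h
      have hpoly' : ∀ r ∈ s :: rest, r ≤ (s :: rest).sum - r := by
        intro r hr
        rcases List.mem_cons.mp hr with h | h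
        · subst h
          simp only [List.sum_cons]
          have : s ≤ T := min_le_right _ _
          linarith
        · have hrT : r ≤ T := List.single_le_sum hrest r h
          have hrL : r ≤ (r1 + r2 + T) - r := by
            have := hpoly r (by simp [h]); rwa [hLsum] at this
          simp only [List.sum_cons]
          have h2r : 2*r - T ≤ s := le_min (by linarith) (by linarith)
          linarith
      obtain ⟨V', hmap, hsum⟩ := ih (s :: rest) hlen' h0' hpoly'
      match V', hmap with
      | x :: W, hmap =>
        simp only [List.map_cons, List.cons.injEq] at hmap
        obtain ⟨hxnorm, hWmap⟩ := hmap
        obtain ⟨u, v, hu, hv, huv⟩ := split_vector x s r1 r2 hxnorm hr1 hr2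
          (le_min (by linarith) (by linarith))
          (le_min (by linarith) (by linarith))
          (min_le_left _ _)
        refine ⟨u :: v :: W, by simp [hu, hv, hWmap], ?_⟩
        have hxW : x + W.sum = 0 := by simpa using hsum
        simp only [List.sum_cons, ← add_assoc, huv]
        exact hxW

/-- Inductive step for the non-triviality of `H_ℓ`: if `ℓ₁, …, ℓₙ₊₁` (with
`n ≥ 3`) are positive integers with even sum and there exist vectors in `ℝ³`
of these lengths summing to zero, then the vectors can be chosen so that the
diagonal length `ℓ'ₙ = |vₙ + vₙ₊₁|` is an integer with `ℓ'ₙ + ℓₙ + ℓₙ₊₁` even.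
Here the first `n - 1` lengths are `ℓ`, and the last two are `a = ℓₙ` and
`b = ℓₙ₊₁`. -/
theorem exists_integral_diagonal (n : ℕ) (hn : 3 ≤ n)
    (ℓ : Fin (n - 1) → ℕ) (a b : ℕ)
    (hpos : ∀ i, 0 < ℓ i) (ha : 0 < a) (hb : 0 < b)
    (heven : Even (∑ i, ℓ i + a + b))
    (h : ∃ (v : Fin (n - 1) → EuclideanSpace ℝ (Fin 3))
          (w z : EuclideanSpace ℝ (Fin 3)),
          (∀ i, ‖v i‖ = ℓ i) ∧ ‖w‖ = a ∧ ‖z‖ = b ∧ (∑ i, v i) + w + z = 0) :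
    ∃ (v : Fin (n - 1) → EuclideanSpace ℝ (Fin 3))
      (w z : EuclideanSpace ℝ (Fin 3)),
      (∀ i, ‖v i‖ = ℓ i) ∧ ‖w‖ = a ∧ ‖z‖ = b ∧ (∑ i, v i) + w + z = 0 ∧
      ∃ d : ℕ, ‖w + z‖ = d ∧ Even (d + a + b) := by
  classical
  obtain ⟨v, w, z, hv, hw, hz, hsum⟩ := h
  set S : ℕ := ∑ i, ℓ i with hS
  have hScast : (S : ℝ) = ∑ i, (ℓ i : ℝ) := by rw [hS]; push_cast; rfl
  set t : ℝ := ‖w + z‖ with ht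
  have hwz : w + z = -∑ i, v i := by
    have h1 : (∑ i, v i) + (w + z) = 0 := by rw [← add_assoc]; exact hsum
    exact eq_neg_of_add_eq_zero_right h1
  have htv : ‖∑ i, v i‖ = t := by rw [ht, hwz, norm_neg]
  -- real inequalities
  have htS : t ≤ (S : ℝ) := by
    rw [← htv, hScast]
    refine (norm_sum_le _ _).trans ?_
    exact le_of_eq (Finset.sum_congr rfl fun i _ => hv i)
  have htab : t ≤ (a : ℝ) + b := by
    rw [ht, ← hw, ← hz]; exact norm_add_le w z
  have habt : (a : ℝ) - b ≤ t := by
    have : ‖w‖ ≤ ‖w + z‖ + ‖z‖ := by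
      calc ‖w‖ = ‖(w + z) - z‖ := by rw [add_sub_cancel_right]
        _ ≤ ‖w + z‖ + ‖z‖ := norm_sub_le _ _
    rw [hw, hz] at this; linarith [this]
  have hbat : (b : ℝ) - a ≤ t := by
    have : ‖z‖ ≤ ‖w + z‖ + ‖w‖ := by
      calc ‖z‖ = ‖(w + z) - w‖ := by rw [add_sub_cancel_left]
        _ ≤ ‖w + z‖ + ‖w‖ := norm_sub_le _ _
    rw [hw, hz] at this; linarith [this]
  have hlt : ∀ i, 2 * (ℓ i : ℝ) ≤ t + S := by
    intro i
    have hsplit : v i + ∑ j ∈ Finset.univ.erase i, v j = ∑ j, v j :=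
      Finset.add_sum_erase _ v (Finset.mem_univ i)
    have hni : ‖v i‖ ≤ ‖∑ j, v j‖ + ‖∑ j ∈ Finset.univ.erase i, v j‖ := by
      calc ‖v i‖ = ‖(∑ j, v j) - ∑ j ∈ Finset.univ.erase i, v j‖ := by
            rw [← hsplit, add_sub_cancel_right]
        _ ≤ _ := norm_sub_le _ _
    have hsum_erase : ‖∑ j ∈ Finset.univ.erase i, v j‖ ≤ (S : ℝ) - ℓ i := by
      refine (norm_sum_le _ _).trans ?_
      have : ∑ j ∈ Finset.univ.erase i, ‖v j‖ = ∑ j ∈ Finset.univ.erase i, (ℓ j : ℝ) :=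
        Finset.sum_congr rfl fun j _ => hv j
      rw [this]
      have h2 : (ℓ i : ℝ) + ∑ j ∈ Finset.univ.erase i, (ℓ j : ℝ) = ∑ j, (ℓ j : ℝ) :=
        Finset.add_sum_erase _ (fun j => ((ℓ j : ℝ))) (Finset.mem_univ i)
      rw [← hScast] at h2
      linarith
    rw [hv i, htv] at hni
    linarith
  -- integer quantities
  set U : ℕ := min (a + b) S with hU
  have htU : t ≤ (U : ℝ) := by
    have : (U : ℝ) = min ((a : ℝ) + b) S := by rw [hU]; push_cast; rfl
    rw [this]
    exact le_min htab htS
  set d0 : ℕ := (Finset.univ.sup fun i => 2 * ℓ i - S) ⊔ ((a - b) ⊔ (b - a)) with hd0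
  have hd0U : d0 ≤ U := by
    rw [hd0]
    refine sup_le (Finset.sup_le fun i _ => ?_) (sup_le ?_ ?_)
    · rw [Nat.sub_le_iff_le_add]
      have : 2 * (ℓ i : ℝ) ≤ (U : ℝ) + S := by linarith [hlt i, htU]
      exact_mod_cast this
    · rw [Nat.sub_le_iff_le_add]
      have : (a : ℝ) ≤ (U : ℝ) + b := by linarith [habt, htU]
      exact_mod_cast this
    · rw [Nat.sub_le_iff_le_add]
      have : (b : ℝ) ≤ (U : ℝ) + a := by linarith [hbat, htU]
      exact_mod_cast this
  have hEvenU : Even (U + a + b) := by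
    rcases le_total (a + b) S with hc | hc
    · rw [hU, min_eq_left hc]; exact ⟨a + b, by ring⟩
    · rw [hU, min_eq_right hc]; exact heven
  set d : ℕ := if Even (d0 + a + b) then d0 else d0 + 1 with hd
  have hd0d : d0 ≤ d := by rw [hd]; split <;> omega
  have hdEven : Even (d + a + b) := by
    rw [hd]; split
    · assumption
    · rename_i hodd
      have : d0 + 1 + a + b = (d0 + a + b) + 1 := by ring
      rw [this]
      exact Nat.even_add_one.mpr hodd
  have hdU : d ≤ U := by
    rw [hd]; split
    · exact hd0U
    · rename_i hodd
      rcases eq_or_lt_of_le hd0U with heq | hlt'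
      · exact absurd (heq ▸ hEvenU) hodd
      · omega
  -- integer lower bounds
  have h_ab_d : a ≤ b + d := by
    have h1 : a - b ≤ d0 := by rw [hd0]; exact le_sup_of_le_right le_sup_left
    omega
  have h_ba_d : b ≤ a + d := by
    have h1 : b - a ≤ d0 := by rw [hd0]; exact le_sup_of_le_right le_sup_right
    omega
  have h_ld : ∀ i, 2 * ℓ i ≤ S + d := by
    intro i
    have h1 : 2 * ℓ i - S ≤ d0 := by
      rw [hd0]
      exact le_sup_of_le_left (Finset.le_sup (f := fun i => 2 * ℓ i - S) (Finset.mem_univ i))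
    omega
  have hdS : d ≤ S := le_trans hdU (min_le_right _ _)
  have hdab : d ≤ a + b := le_trans hdU (min_le_left _ _)
  -- build the polygon
  set Llist : List ℝ := (d : ℝ) :: List.ofFn (fun i => (ℓ i : ℝ)) with hL
  have hLsum : Llist.sum = (d : ℝ) + S := by
    rw [hL, List.sum_cons, List.sum_ofFn, hScast]
  have h0L : ∀ r ∈ Llist, 0 ≤ r := by
    intro r hr
    rw [hL, List.mem_cons] at hr
    rcases hr with h' | h'
    · subst h'; positivity
    · obtain ⟨i, rfl⟩ := Set.mem_range.mp (List.mem_ofFn.mp h')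
      positivity
  have hpolyL : ∀ r ∈ Llist, r ≤ Llist.sum - r := by
    intro r hr
    rw [hL, List.mem_cons] at hr
    rcases hr with h' | h'
    · subst h'
      rw [hLsum]
      have : (d : ℝ) ≤ S := by exact_mod_cast hdS
      linarith
    · obtain ⟨i, rfl⟩ := Set.mem_range.mp (List.mem_ofFn.mp h')
      rw [hLsum]
      have : 2 * (ℓ i : ℝ) ≤ (S : ℝ) + d := by exact_mod_cast h_ld i
      linarith
  obtain ⟨V, hmap, hVsum⟩ := polygon_list Llist.length Llist le_rfl h0L hpolyL
  match V, hmap with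
  | x :: W, hmap =>
    rw [hL, List.map_cons, List.cons.injEq] at hmap
    obtain ⟨hxnorm, hWmap⟩ := hmap
    have hWlen : W.length = n - 1 := by
      have := congrArg List.length hWmap
      simpa using this
    set vnew : Fin (n - 1) → EuclideanSpace ℝ (Fin 3) :=
      fun i => W.get (Fin.cast hWlen.symm i) with hvnew
    have hWofFn : W = List.ofFn vnew := by
      apply List.ext_get (by simp [hWlen])
      intro i h1 h2
      simp [hvnew]
    have hmapnew : (∀ i, ‖vnew i‖ = (ℓ i : ℝ)) := by
      rw [hWofFn, List.map_ofFn] at hWmap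
      intro i
      have := congrFun (List.ofFn_inj.mp hWmap) i
      simpa using this
    have hsumnew : ∑ i, vnew i = W.sum := by rw [hWofFn, List.sum_ofFn]
    have hab_r : (a : ℝ) ≤ b + d := by exact_mod_cast h_ab_d
    have hba_r : (b : ℝ) ≤ a + d := by exact_mod_cast h_ba_d
    obtain ⟨w', z', hw', hz', hw'z'⟩ := split_vector x (d : ℝ) a b hxnorm
      (by positivity) (by positivity)
      (by linarith) (by linarith)
      (by exact_mod_cast hdab)
    have hxW : x + W.sum = 0 := by simpa using hVsum
    refine ⟨vnew, w', z', hmapnew, hw', hz', ?_, d, ?_, hdEven⟩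
    · rw [hsumnew, add_assoc, hw'z']
      rw [add_comm]
      exact hxW
    · rw [hw'z', hxnorm]
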